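/- For all real numbers 0 < μ ≤ L and all ρ > 0, the SAM learning-rate threshold satisfies 2/(μ+L) − (μ+L)/(2μL(μ/(ρL²) + 1)) ≤ 2/((1 + μρ)(μ + L)); in particular any learning rate below this threshold makes the SAM contraction factor 1 − (1 + μρ)·ημL/(μ+L) lie in [0, 1). -/

import Mathlib

/-- The SAM learning-rate threshold satisfies
`2/(μ+L) − (μ+L)/(2μL(μ/(ρL²) + 1)) ≤ 2/((1 + μρ)(μ + L))`; in particular, any
positive learning rate below the threshold yields a contraction factor
`1 − (1 + μρ)ημL/(μ+L)` in `[0, 1)`. -/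
theorem sam_threshold_bound_and_contraction_factor (μ L ρ : ℝ)
    (hμ : 0 < μ) (hμL : μ ≤ L) (hρ : 0 < ρ) :
    2 / (μ + L) - (μ + L) / (2 * μ * L * (μ / (ρ * L ^ 2) + 1))
      ≤ 2 / ((1 + μ * ρ) * (μ + L)) ∧
    ∀ η : ℝ, 0 < η →
      η ≤ 2 / (μ + L) - (μ + L) / (2 * μ * L * (μ / (ρ * L ^ 2) + 1)) →
      1 - (1 + μ * ρ) * η * μ * L / (μ + L) ∈ Set.Ico (0 : ℝ) 1 := by
  have hL : 0 < L := lt_of_lt_of_le hμ hμL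
  have hs : 0 < μ + L := by linarith
  have hc : 0 < 1 + μ * ρ := by positivity
  have hd : 0 < μ / (ρ * L ^ 2) + 1 := by positivity
  have hmain : 2 / (μ + L) - (μ + L) / (2 * μ * L * (μ / (ρ * L ^ 2) + 1))
      ≤ 2 / ((1 + μ * ρ) * (μ + L)) := by
    have key : (μ + L) / (2 * μ * L * (μ / (ρ * L ^ 2) + 1))
        = (μ + L) * (ρ * L ^ 2) / (2 * μ * L * (μ + ρ * L ^ 2)) := by
      rw [div_eq_div_iff (by positivity) (by positivity)]
      field_simp
    rw [key, div_sub_div _ _ (ne_of_gt hs) (by positivity),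
      div_le_div_iff₀ (by positivity) (by positivity)]
    have h1 : 4 * μ ^ 2 ≤ (μ + L) ^ 2 := by nlinarith [sq_nonneg (L - μ)]
    have h2 : 4 * μ ^ 3 ≤ (μ + L) ^ 2 * L := by nlinarith [sq_nonneg (L - μ), mul_pos hμ hμ]
    have h2' : 4 * μ ^ 2 * (ρ * L ^ 2) ≤ (μ + L) ^ 2 * (μ * ρ * L) := by
      have : 4 * μ * L ≤ (μ + L) ^ 2 := by nlinarith [sq_nonneg (L - μ)]
      nlinarith [mul_pos (mul_pos hμ hρ) hL]
    have h3 : 4 * μ ^ 2 * (μ + ρ * L ^ 2) ≤ (μ + L) ^ 2 * (L * (1 + μ * ρ)) := by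
      nlinarith
    nlinarith [mul_nonneg (mul_nonneg hρ.le hs.le) (sub_nonneg.2 h3),
      mul_pos hμ hL, mul_pos hρ hs]
  refine ⟨hmain, fun η hη hle => ?_⟩
  have hle2 : η ≤ 2 / ((1 + μ * ρ) * (μ + L)) := hle.trans hmain
  constructor
  · have h3 : (1 + μ * ρ) * η * μ * L ≤ μ + L := by
      have h4 : η * ((1 + μ * ρ) * (μ + L)) ≤ 2 := by
        rw [← le_div_iff₀ (by positivity)]; exact hle2
      nlinarith [sq_nonneg (L - μ), mul_pos hμ hL]
    have := div_le_one_of_le₀ h3 hs.le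
    linarith [this]
  · have : 0 < (1 + μ * ρ) * η * μ * L / (μ + L) := by positivity
    linarith
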